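/- Let G be a tournament on n vertices containing fewer than k! transitive subtournaments on k vertices. Then there exists a linear ordering π of the vertices such that the 'forward' graph G_π (with edges those oriented forwards under π) has independence number less than k, and hence chromatic number at least n/k. -/

import Mathlib

/-- The graph of edges of the tournament `r` oriented forwards according to the ordering `π`. -/
def forwardGraph {n : ℕ} (r : Fin n → Fin n → Prop) (π : Equiv.Perm (Fin n)) :
    SimpleGraph (Fin n) where
  Adj u v := (π u < π v ∧ r u v) ∨ (π v < π u ∧ r v u)
  symm := ⟨by intro u v h; tauto⟩
  loopless := ⟨by intro v h; rcases h with ⟨h, -⟩ | ⟨h, -⟩ <;> exact lt_irrefl _ h⟩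

/-- `S` induces a transitive (acyclic) subtournament of `r`. -/
def TransitiveOn {n : ℕ} (r : Fin n → Fin n → Prop) (S : Finset (Fin n)) : Prop :=
  ∀ v, ¬ Relation.TransGen (fun a b => a ∈ S ∧ b ∈ S ∧ r a b) v v

/-- `S` is an independent set of the forward graph. -/
def IndepOn {n : ℕ} (r : Fin n → Fin n → Prop) (π : Equiv.Perm (Fin n))
    (S : Finset (Fin n)) : Prop :=
  ∀ u ∈ S, ∀ v ∈ S, ¬ (forwardGraph r π).Adj u v

section lemmas

variable {n k : ℕ} {r : Fin n → Fin n → Prop} {π : Equiv.Perm (Fin n)} {S : Finset (Fin n)}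

lemma indepOn_mono {S' : Finset (Fin n)} (h : IndepOn r π S) (hsub : S' ⊆ S) :
    IndepOn r π S' := fun u hu v hv => h u (hsub hu) v (hsub hv)

lemma transitiveOn_of_indepOn (hirr : ∀ v, ¬ r v v) (h : IndepOn r π S) :
    TransitiveOn r S := by
  intro v hv
  have key : ∀ a b, (a ∈ S ∧ b ∈ S ∧ r a b) → π b < π a := by
    rintro a b ⟨ha, hb, hr⟩
    have hne : a ≠ b := by rintro rfl; exact hirr a hr
    have hadj := h a ha b hb
    simp only [forwardGraph, not_or, not_and] at hadj
    have h1 : ¬ π a < π b := fun hlt => hadj.1 hlt hr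
    have h2 : π a ≠ π b := fun he => hne (π.injective he)
    omega
  have h2 := Relation.TransGen.mono key _ _ hv
  rw [show (Relation.TransGen fun a b : Fin n => π b < π a) = fun a b => π b < π a from
    @Relation.transGen_eq_self _ _ ⟨fun a b c hab hbc => lt_trans hbc hab⟩] at h2
  exact lt_irrefl _ h2

/-- On an independent set, the ordering is forced: earlier iff beaten. -/
lemma indep_order (htour : ∀ u v, u ≠ v → (r u v ↔ ¬ r v u)) (h : IndepOn r π S)
    {u v : Fin n} (hu : u ∈ S) (hv : v ∈ S) (hne : u ≠ v) : π u < π v ↔ r v u := by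
  have hadj := h u hu v hv
  simp only [forwardGraph, not_or, not_and] at hadj
  constructor
  · intro hlt
    by_contra hr
    exact hadj.1 hlt ((htour u v hne).2 hr)
  · intro hr
    have h1 : ¬ π v < π u := fun hlt => hadj.2 hlt hr
    have h2 : π u ≠ π v := fun he => hne (π.injective he)
    omega

end lemmas

section counting

open Finset

variable {n k : ℕ} {r : Fin n → Fin n → Prop}

/-- The key injection: pairs of (an ordering making `S` independent, a permutation of `S`)
inject into all orderings. -/
lemma count_key (htour : ∀ u v, u ≠ v → (r u v ↔ ¬ r v u)) (S : Finset (Fin n)) :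
    Nat.card {π : Equiv.Perm (Fin n) // IndepOn r π S} * S.card.factorial
      ≤ n.factorial := by
  classical
  have hcard : Nat.card {π : Equiv.Perm (Fin n) // IndepOn r π S} * S.card.factorial
      = Nat.card ({π : Equiv.Perm (Fin n) // IndepOn r π S} × Equiv.Perm {x // x ∈ S}) := by
    rw [Nat.card_prod, Nat.card_eq_fintype_card (α := Equiv.Perm {x // x ∈ S}),
      Fintype.card_perm, Fintype.card_coe]
  rw [hcard]
  have : n.factorial = Nat.card (Equiv.Perm (Fin n)) := by
    rw [Nat.card_eq_fintype_card, Fintype.card_perm, Fintype.card_fin]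
  rw [this]
  set F : {π : Equiv.Perm (Fin n) // IndepOn r π S} × Equiv.Perm {x // x ∈ S}
      → Equiv.Perm (Fin n) :=
    fun p => p.1.1 * Equiv.Perm.ofSubtype p.2 with hF
  apply Nat.card_le_card_of_injective F
  rintro ⟨⟨π₁, h₁⟩, σ₁⟩ ⟨⟨π₂, h₂⟩, σ₂⟩ heq
  simp only [hF, Prod.mk.injEq] at heq ⊢
  -- first show π₁ = π₂
  have hπ : π₁ = π₂ := by
    set σ : Equiv.Perm {x // x ∈ S} := σ₂ * σ₁⁻¹ with hσ
    have hτ : π₁ = π₂ * Equiv.Perm.ofSubtype σ := by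
      rw [hσ, map_mul, map_inv, ← mul_assoc, ← heq, mul_assoc, mul_inv_cancel, mul_one]
    -- show σ = 1
    have hmono : ∀ u v : {x // x ∈ S}, π₂ (σ u).1 < π₂ (σ v).1 ↔ π₂ u.1 < π₂ v.1 := by
      intro u v
      rcases eq_or_ne u v with rfl | hne
      · simp
      have hne' : (σ u : Fin n) ≠ (σ v : Fin n) := by
        intro h; exact hne (σ.injective (Subtype.ext h))
      have hne'' : (u : Fin n) ≠ (v : Fin n) := fun h => hne (Subtype.ext h)
      have e1 : π₂ (σ u).1 < π₂ (σ v).1 ↔ r (σ v).1 (σ u).1 :=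
        indep_order htour h₂ (σ u).2 (σ v).2 hne'
      have e2 : π₁ u.1 < π₁ v.1 ↔ r v.1 u.1 := indep_order htour h₁ u.2 v.2 hne''
      have e3 : π₂ u.1 < π₂ v.1 ↔ r v.1 u.1 := indep_order htour h₂ u.2 v.2 hne''
      have e4 : ∀ w : {x // x ∈ S}, π₁ w.1 = π₂ (σ w).1 := by
        intro w
        rw [hτ, Equiv.Perm.mul_apply, Equiv.Perm.ofSubtype_apply_of_mem σ w.2]
      rw [← e4 u, ← e4 v, e2, e3]
    have hσiso : σ = 1 := by
      -- conjugate σ to a permutation of the image of S under π₂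
      have hmem : ∀ x : Fin n, x ∈ S ↔ π₂ x ∈ S.image (fun y => π₂ y) := by
        intro x
        constructor
        · intro hx; exact Finset.mem_image_of_mem _ hx
        · intro hx
          obtain ⟨y, hy, hyx⟩ := Finset.mem_image.1 hx
          rwa [← π₂.injective hyx]
      let E : {x // x ∈ S} ≃ {y // y ∈ S.image (fun y => π₂ y)} :=
        (π₂ : Fin n ≃ Fin n).subtypeEquiv hmem
      have hE : ∀ s : {x // x ∈ S}, ((E s : Fin n)) = π₂ s.1 := fun s => rfl
      let τ : Equiv.Perm {y // y ∈ S.image (fun y => π₂ y)} :=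
        E.symm.trans (σ.trans E)
      have hτval : ∀ a, (τ a : Fin n) = π₂ (σ (E.symm a)).1 := fun a => rfl
      have hτmono : ∀ a b, τ a < τ b ↔ a < b := by
        intro a b
        rw [Subtype.coe_lt_coe.symm, Subtype.coe_lt_coe.symm, hτval, hτval]
        rw [hmono]
        have ha : π₂ (E.symm a).1 = (a : Fin n) := by
          rw [← hE (E.symm a), E.apply_symm_apply]
        have hb : π₂ (E.symm b).1 = (b : Fin n) := by
          rw [← hE (E.symm b), E.apply_symm_apply]
        rw [ha, hb]
      have hτ1 : τ = 1 := by
        haveI : WellFoundedLT {y // y ∈ S.image (fun y => π₂ y)} :=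
          Finite.to_wellFoundedLT
        let e : {y // y ∈ S.image (fun y => π₂ y)} ≃o {y // y ∈ S.image (fun y => π₂ y)} :=
          { τ with
            map_rel_iff' := by
              intro a b
              show τ a ≤ τ b ↔ a ≤ b
              rw [← not_lt, ← not_lt, not_iff_not]
              exact hτmono b a }
        have he : e = OrderIso.refl _ := Subsingleton.elim _ _
        apply Equiv.ext
        intro x
        have h3 : e x = OrderIso.refl _ x := by rw [he]
        exact h3
      apply Equiv.ext
      intro x
      have h4 : τ (E x) = E x := by rw [hτ1]; rfl
      have h5 : E (σ x) = E x := by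
        have : τ (E x) = E (σ (E.symm (E x))) := rfl
        rw [E.symm_apply_apply] at this
        rw [← this, h4]
      have := E.injective h5
      simpa using this
    rw [hτ, hσiso, map_one, mul_one]
  subst hπ
  refine ⟨rfl, ?_⟩
  have hc := mul_left_cancel heq
  apply Equiv.ext
  intro x
  have h2 : Equiv.Perm.ofSubtype σ₁ (x : Fin n) = Equiv.Perm.ofSubtype σ₂ (x : Fin n) := by
    rw [hc]
  rw [Equiv.Perm.ofSubtype_apply_of_mem σ₁ x.2, Equiv.Perm.ofSubtype_apply_of_mem σ₂ x.2] at h2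
  exact Subtype.ext h2

end counting

theorem stmt2 {n k : ℕ} (r : Fin n → Fin n → Prop)
    (hirr : ∀ v, ¬ r v v) (htour : ∀ u v, u ≠ v → (r u v ↔ ¬ r v u))
    (hfew : Nat.card {S : Finset (Fin n) // S.card = k ∧ TransitiveOn r S} < k.factorial) :
    ∃ π : Equiv.Perm (Fin n),
      (∀ S : Finset (Fin n),
        (∀ u ∈ S, ∀ v ∈ S, ¬ (forwardGraph r π).Adj u v) → S.card < k) ∧
      (n : ℕ∞) ≤ (k : ℕ∞) * (forwardGraph r π).chromaticNumber := by
  classical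
  -- Step 1: find an ordering with no independent k-set.
  set Bad : Equiv.Perm (Fin n) → Finset (Finset (Fin n)) :=
    fun π => Finset.univ.filter (fun S => S.card = k ∧ IndepOn r π S) with hBad
  have hmain : ∃ π, Bad π = ∅ := by
    by_contra hcon
    push_neg at hcon
    have hlb : n.factorial ≤ ∑ π : Equiv.Perm (Fin n), (Bad π).card := by
      calc n.factorial = ∑ π : Equiv.Perm (Fin n), 1 := by
            simp [Fintype.card_perm]
        _ ≤ _ := Finset.sum_le_sum (fun π _ =>
            Finset.card_pos.2 (hcon π))
    have hswap : ∑ π : Equiv.Perm (Fin n), (Bad π).card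
        = ∑ S : Finset (Fin n),
            (Finset.univ.filter (fun π : Equiv.Perm (Fin n) => S.card = k ∧ IndepOn r π S)).card := by
      simp only [hBad, Finset.card_filter]
      rw [Finset.sum_comm]
    -- per-S bound
    set T : Finset (Finset (Fin n)) :=
      Finset.univ.filter (fun S => S.card = k ∧ TransitiveOn r S) with hT
    have hperS : ∀ S : Finset (Fin n),
        (Finset.univ.filter (fun π : Equiv.Perm (Fin n) => S.card = k ∧ IndepOn r π S)).card
          * k.factorial ≤ (if S ∈ T then 1 else 0) * n.factorial := by
      intro S
      by_cases hS : S ∈ T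
      · simp only [hS, if_true, one_mul]
        have hSk : S.card = k := (Finset.mem_filter.1 hS).2.1
        have : (Finset.univ.filter (fun π : Equiv.Perm (Fin n) => S.card = k ∧ IndepOn r π S)).card
            = Nat.card {π : Equiv.Perm (Fin n) // IndepOn r π S} := by
          rw [Nat.card_eq_fintype_card, Fintype.card_subtype]
          congr 1
          apply Finset.filter_congr
          intro π _
          simp [hSk]
        rw [this, ← hSk]
        exact count_key htour S
      · simp only [hS, if_false, zero_mul]
        have : (Finset.univ.filter (fun π : Equiv.Perm (Fin n) => S.card = k ∧ IndepOn r π S)) = ∅ := by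
          rw [Finset.filter_eq_empty_iff]
          rintro π - ⟨hk, hind⟩
          exact hS (Finset.mem_filter.2 ⟨Finset.mem_univ _,
            hk, transitiveOn_of_indepOn hirr hind⟩)
        simp [this]
    have hTcard : T.card < k.factorial := by
      have : Nat.card {S : Finset (Fin n) // S.card = k ∧ TransitiveOn r S} = T.card := by
        rw [Nat.card_eq_fintype_card, Fintype.card_subtype]
      omega
    have hchain : (∑ π : Equiv.Perm (Fin n), (Bad π).card) * k.factorial < n.factorial * k.factorial := by
      calc (∑ π : Equiv.Perm (Fin n), (Bad π).card) * k.factorial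
          = ∑ S : Finset (Fin n),
              (Finset.univ.filter
                (fun π : Equiv.Perm (Fin n) => S.card = k ∧ IndepOn r π S)).card * k.factorial := by
            rw [hswap, Finset.sum_mul]
        _ ≤ ∑ S : Finset (Fin n), (if S ∈ T then 1 else 0) * n.factorial :=
            Finset.sum_le_sum (fun S _ => hperS S)
        _ = T.card * n.factorial := by
            rw [← Finset.sum_mul]
            congr 1
            simp [Finset.sum_ite_mem, Finset.inter_comm]
        _ < k.factorial * n.factorial :=
            Nat.mul_lt_mul_of_lt_of_le hTcard le_rfl (Nat.factorial_pos n)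
        _ = n.factorial * k.factorial := Nat.mul_comm _ _
    have := Nat.lt_of_mul_lt_mul_right hchain
    omega
  obtain ⟨π, hπ⟩ := hmain
  have hindep : ∀ S : Finset (Fin n),
      (∀ u ∈ S, ∀ v ∈ S, ¬ (forwardGraph r π).Adj u v) → S.card < k := by
    intro S hS
    by_contra hge
    push_neg at hge
    obtain ⟨S', hsub, hS'⟩ := Finset.exists_subset_card_eq hge
    have : S' ∈ Bad π := Finset.mem_filter.2 ⟨Finset.mem_univ _, hS',
      indepOn_mono hS hsub⟩
    rw [hπ] at this
    exact absurd this (Finset.notMem_empty _)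
  refine ⟨π, hindep, ?_⟩
  -- Step 2: chromatic number bound.
  set G := forwardGraph r π with hG
  have hcol : G.Colorable (ENat.toNat G.chromaticNumber) :=
    G.colorable_chromaticNumber_of_fintype
  set m := ENat.toNat G.chromaticNumber with hm
  have hne : G.chromaticNumber ≠ ⊤ := by
    rw [SimpleGraph.chromaticNumber_ne_top_iff_exists]
    exact ⟨Fintype.card (Fin n), G.colorable_of_fintype⟩
  obtain C := hcol.some
  have hnm : n ≤ m * k := by
    have hcard : n = ∑ i : Fin m, (Finset.univ.filter (fun v : Fin n => C v = i)).card := by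
      rw [← Finset.card_eq_sum_card_fiberwise (f := fun v => C v)
        (fun x _ => Finset.mem_univ _)]
      simp
    have hfib : ∀ i : Fin m, (Finset.univ.filter (fun v : Fin n => C v = i)).card ≤ k := by
      intro i
      refine le_of_lt (hindep _ ?_)
      intro u hu v hv hadj
      have := C.valid hadj
      simp only [Finset.mem_filter] at hu hv
      exact this (hu.2.trans hv.2.symm)
    calc n = ∑ i : Fin m, (Finset.univ.filter (fun v : Fin n => C v = i)).card := hcard
      _ ≤ ∑ _i : Fin m, k := Finset.sum_le_sum (fun i _ => hfib i)
      _ = m * k := by simp [Finset.sum_const, Finset.card_univ]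
  have hcast : ((m : ℕ∞)) = G.chromaticNumber := ENat.coe_toNat hne
  calc (n : ℕ∞) ≤ ((m * k : ℕ) : ℕ∞) := by exact_mod_cast hnm
    _ = (k : ℕ∞) * (m : ℕ∞) := by push_cast; ring
    _ = (k : ℕ∞) * G.chromaticNumber := by rw [hcast]
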